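/- Consider n = 2, w = (1,1), b = −1.5, and the set S = {(x,y) ∈ [0,1]^2 × ℝ : y = max(0, x_1 + x_2 − 1.5)}. Then the convex hull of S equals {(x,y) : x ∈ [0,1]^2, y ≥ max(0, x_1 + x_2 − 1.5), y ≤ 0.5·x_2, y ≤ 0.5·x_1}. -/

import Mathlib

private lemma stmt10_aux1 (x : Fin 2 → ℝ) (y : ℝ) (hx : ∀ i, 0 ≤ x i ∧ x i ≤ 1)
    (hg : max 0 (x 0 + x 1 - 1.5) ≤ y) (hu : y ≤ 0.5 * x 0) (hle : x 0 ≤ x 1) :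
    (x, y) ∈ convexHull ℝ {p : (Fin 2 → ℝ) × ℝ |
        (∀ i, 0 ≤ p.1 i ∧ p.1 i ≤ 1) ∧ p.2 = max 0 (p.1 0 + p.1 1 - 1.5)} := by
  set S := {p : (Fin 2 → ℝ) × ℝ |
        (∀ i, 0 ≤ p.1 i ∧ p.1 i ≤ 1) ∧ p.2 = max 0 (p.1 0 + p.1 1 - 1.5)} with hS
  set g := max 0 (x 0 + x 1 - 1.5) with hgdef
  have hg0 : (0:ℝ) ≤ g := le_max_left _ _
  obtain ⟨t, ht0, ht1, ht⟩ : ∃ t : ℝ, 0 ≤ t ∧ t ≤ 1 ∧ t * (x 0 / 2 - g) = y - g := by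
    rcases le_or_gt (x 0 / 2) g with h | h
    · have hyg : y = g := le_antisymm (by linarith) hg
      exact ⟨0, le_refl 0, zero_le_one, by rw [hyg]; ring⟩
    · refine ⟨(y - g) / (x 0 / 2 - g), div_nonneg (by linarith) (by linarith), ?_,
        div_mul_cancel₀ _ (by linarith)⟩
      rw [div_le_one (by linarith)]; linarith
  have key : (x, y) = ∑ i : Fin 4,
      (![t * (1 - x 1), t * (x 1 - x 0), t * (x 0), 1 - t] i) •
      (![((![0,0] : Fin 2 → ℝ), (0:ℝ)), (![0,1], 0), (![1,1], 0.5), (x, g)] i) := by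
    rw [Fin.sum_univ_four]
    rw [Prod.ext_iff]
    constructor
    · funext i
      simp only [Prod.fst_add, Prod.smul_fst, Pi.add_apply, Pi.smul_apply, smul_eq_mul]
      fin_cases i <;> norm_num [Matrix.cons_val_two, Matrix.cons_val_three, Matrix.tail_cons, Matrix.head_cons] <;> ring
    · simp only [Prod.snd_add, Prod.smul_snd, smul_eq_mul]
      norm_num [Matrix.cons_val_two, Matrix.cons_val_three, Matrix.tail_cons, Matrix.head_cons]
      nlinarith [ht]
  rw [key]
  apply (convex_convexHull ℝ S).sum_mem
  · intro i _
    fin_cases i <;> norm_num <;>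
      nlinarith [(hx 0).1, (hx 0).2, (hx 1).1, (hx 1).2]
  · rw [Fin.sum_univ_four]; norm_num [Matrix.cons_val_two, Matrix.cons_val_three, Matrix.tail_cons, Matrix.head_cons]; ring
  · intro i _
    fin_cases i <;> apply subset_convexHull <;> rw [hS]
    · exact ⟨fun i => by fin_cases i <;> norm_num, by norm_num⟩
    · exact ⟨fun i => by fin_cases i <;> norm_num, by norm_num⟩
    · exact ⟨fun i => by fin_cases i <;> norm_num, by norm_num⟩
    · exact ⟨hx, rfl⟩

private lemma stmt10_aux2 (x : Fin 2 → ℝ) (y : ℝ) (hx : ∀ i, 0 ≤ x i ∧ x i ≤ 1)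
    (hg : max 0 (x 0 + x 1 - 1.5) ≤ y) (hu : y ≤ 0.5 * x 1) (hle : x 1 ≤ x 0) :
    (x, y) ∈ convexHull ℝ {p : (Fin 2 → ℝ) × ℝ |
        (∀ i, 0 ≤ p.1 i ∧ p.1 i ≤ 1) ∧ p.2 = max 0 (p.1 0 + p.1 1 - 1.5)} := by
  set S := {p : (Fin 2 → ℝ) × ℝ |
        (∀ i, 0 ≤ p.1 i ∧ p.1 i ≤ 1) ∧ p.2 = max 0 (p.1 0 + p.1 1 - 1.5)} with hS
  set g := max 0 (x 0 + x 1 - 1.5) with hgdef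
  have hg0 : (0:ℝ) ≤ g := le_max_left _ _
  obtain ⟨t, ht0, ht1, ht⟩ : ∃ t : ℝ, 0 ≤ t ∧ t ≤ 1 ∧ t * (x 1 / 2 - g) = y - g := by
    rcases le_or_gt (x 1 / 2) g with h | h
    · have hyg : y = g := le_antisymm (by linarith) hg
      exact ⟨0, le_refl 0, zero_le_one, by rw [hyg]; ring⟩
    · refine ⟨(y - g) / (x 1 / 2 - g), div_nonneg (by linarith) (by linarith), ?_,
        div_mul_cancel₀ _ (by linarith)⟩
      rw [div_le_one (by linarith)]; linarith
  have key : (x, y) = ∑ i : Fin 4,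
      (![t * (1 - x 0), t * (x 0 - x 1), t * (x 1), 1 - t] i) •
      (![((![0,0] : Fin 2 → ℝ), (0:ℝ)), (![1,0], 0), (![1,1], 0.5), (x, g)] i) := by
    rw [Fin.sum_univ_four]
    rw [Prod.ext_iff]
    constructor
    · funext i
      simp only [Prod.fst_add, Prod.smul_fst, Pi.add_apply, Pi.smul_apply, smul_eq_mul]
      fin_cases i <;> norm_num [Matrix.cons_val_two, Matrix.cons_val_three, Matrix.tail_cons, Matrix.head_cons] <;> ring
    · simp only [Prod.snd_add, Prod.smul_snd, smul_eq_mul]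
      norm_num [Matrix.cons_val_two, Matrix.cons_val_three, Matrix.tail_cons, Matrix.head_cons]
      nlinarith [ht]
  rw [key]
  apply (convex_convexHull ℝ S).sum_mem
  · intro i _
    fin_cases i <;> norm_num <;>
      nlinarith [(hx 0).1, (hx 0).2, (hx 1).1, (hx 1).2]
  · rw [Fin.sum_univ_four]; norm_num [Matrix.cons_val_two, Matrix.cons_val_three, Matrix.tail_cons, Matrix.head_cons]; ring
  · intro i _
    fin_cases i <;> apply subset_convexHull <;> rw [hS]
    · exact ⟨fun i => by fin_cases i <;> norm_num, by norm_num⟩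
    · exact ⟨fun i => by fin_cases i <;> norm_num, by norm_num⟩
    · exact ⟨fun i => by fin_cases i <;> norm_num, by norm_num⟩
    · exact ⟨hx, rfl⟩

/-- explicit convex hull of the ReLU graph
`y = max(0, x₁ + x₂ − 1.5)` over `[0,1]²`. -/
theorem stmt10 :
    convexHull ℝ {p : (Fin 2 → ℝ) × ℝ |
        (∀ i, 0 ≤ p.1 i ∧ p.1 i ≤ 1) ∧ p.2 = max 0 (p.1 0 + p.1 1 - 1.5)} =
      {p : (Fin 2 → ℝ) × ℝ |
        (∀ i, 0 ≤ p.1 i ∧ p.1 i ≤ 1) ∧ max 0 (p.1 0 + p.1 1 - 1.5) ≤ p.2 ∧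
          p.2 ≤ 0.5 * p.1 1 ∧ p.2 ≤ 0.5 * p.1 0} := by
  apply Set.Subset.antisymm
  · apply convexHull_min
    · rintro ⟨x, y⟩ ⟨hx, hy⟩
      refine ⟨hx, ?_, ?_, ?_⟩ <;> rw [hy]
      · exact max_le (by nlinarith [(hx 1).1]) (by nlinarith [(hx 0).2, (hx 1).2])
      · exact max_le (by nlinarith [(hx 0).1]) (by nlinarith [(hx 0).2, (hx 1).2])
    · rintro ⟨x, y⟩ ⟨hx, hg, h1, h0⟩ ⟨x', y'⟩ ⟨hx', hg', h1', h0'⟩ a b ha hb hab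
      rw [max_le_iff] at hg hg'
      refine ⟨fun i => ?_, ?_, ?_, ?_⟩ <;>
        simp only [Prod.fst_add, Prod.snd_add, Prod.smul_fst, Prod.smul_snd, Pi.add_apply,
          Pi.smul_apply, smul_eq_mul, max_le_iff]
      · exact ⟨by nlinarith [(hx i).1, (hx' i).1], by nlinarith [(hx i).2, (hx' i).2]⟩
      · constructor <;> nlinarith [hg.1, hg.2, hg'.1, hg'.2]
      · nlinarith
      · nlinarith
  · rintro ⟨x, y⟩ ⟨hx, hg, h1, h0⟩
    rcases le_total (x 0) (x 1) with h | h
    · exact stmt10_aux1 x y hx hg h0 h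
    · exact stmt10_aux2 x y hx hg h1 h
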